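/- The equivariant cochain operators t_n φ(h, a⁰,…,aⁿ) = φ(h₍₂₎, S⁻¹(h₍₁₎)(aⁿ), a⁰, …, a^{n-1}) satisfy t_n^{n+1} = id on equivariant cochains: applying t_n (n+1) times to an equivariant φ returns φ. -/

import Mathlib

set_option maxHeartbeats 1000000
set_option synthInstance.maxHeartbeats 200000
set_option linter.unusedSectionVars false

noncomputable section

open TensorProduct

variable {H A : Type} [Ring H] [HopfAlgebra ℂ H] [Ring A] [Algebra ℂ A]

/-- `sweedler N Δ₁ Δ₂ k g F` is the Sweedler sum `Σ F (g₍₁₎, …, g₍ₖ₊₁₎)`, computed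
from a chosen finite representation `comul g = Σ_{i < N g} Δ₁ g i ⊗ Δ₂ g i` of the
comultiplication. -/
def sweedler (N : H → ℕ) (Δ₁ Δ₂ : H → ℕ → H) :
    (k : ℕ) → H → ((Fin (k+1) → H) → ℂ) → ℂ
  | 0, g, F => F ![g]
  | k+1, g, F => ∑ i ∈ Finset.range (N g),
      sweedler N Δ₁ Δ₂ k (Δ₂ g i) (fun v => F (Fin.cons (Δ₁ g i) v))

/-- The multiplication of the crossed product `A ⋊ H`, as a linear map on
`(A ⊗ H) ⊗ (A ⊗ H)`; on pure tensors it is `(a ⊗ h)(b ⊗ g) = a h₍₁₎(b) ⊗ h₍₂₎ g`. -/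
def cpMul (ρ : H →ₗ[ℂ] A →ₗ[ℂ] A) :
    (A ⊗[ℂ] H) ⊗[ℂ] (A ⊗[ℂ] H) →ₗ[ℂ] A ⊗[ℂ] H :=
  (LinearMap.rTensor H (LinearMap.mul' ℂ A)) ∘ₗ
  (TensorProduct.assoc ℂ A A H).symm.toLinearMap ∘ₗ
  (LinearMap.lTensor A (TensorProduct.map (TensorProduct.lift ρ) (LinearMap.mul' ℂ H))) ∘ₗ
  (LinearMap.lTensor A (TensorProduct.tensorTensorTensorComm ℂ H H A H).toLinearMap) ∘ₗ
  (LinearMap.lTensor A (LinearMap.rTensor (A ⊗[ℂ] H) (Coalgebra.comul (R := ℂ)))) ∘ₗ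
  (TensorProduct.assoc ℂ A H (A ⊗[ℂ] H)).toLinearMap

/-- The tuple obtained from `x` by replacing the pair `(xʲ, xʲ⁺¹)` by the single
entry `y` (used with `y = xʲ xʲ⁺¹` for the `j`-th face map). -/
def faceTup {α : Type} {n : ℕ} (j : Fin (n+1)) (y : α) (x : Fin (n+2) → α) :
    Fin (n+1) → α :=
  fun k => if (k : ℕ) < (j : ℕ) then x k.castSucc else if k = j then y else x k.succ

/-- The `i`-th term of the product `(p.1 ⊗ p.2)(q.1 ⊗ q.2)` in `A ⋊ H`, for the chosen
representation of the comultiplication: `p.1 · (Δ₁ p.2 i)(q.1) ⊗ (Δ₂ p.2 i) q.2`. -/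
def cpPairTerm (Δ₁ Δ₂ : H → ℕ → H) (ρ : H →ₗ[ℂ] A →ₗ[ℂ] A) (p q : A × H) (i : ℕ) :
    A × H :=
  (p.1 * ρ (Δ₁ p.2 i) q.1, Δ₂ p.2 i * q.2)

/-- The Hochschild coboundary of a cochain on the crossed product `A ⋊ H`. -/
def cpb (ρ : H →ₗ[ℂ] A →ₗ[ℂ] A) {n : ℕ} (f : (Fin (n+1) → A ⊗[ℂ] H) → ℂ) :
    (Fin (n+2) → A ⊗[ℂ] H) → ℂ := fun x =>
  (∑ j : Fin (n+1), (-1 : ℂ) ^ (j : ℕ) *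
      f (faceTup j (cpMul ρ (x j.castSucc ⊗ₜ[ℂ] x j.succ)) x))
  + (-1 : ℂ) ^ (n+1) *
      f (fun k => if (k : ℕ) = 0 then cpMul ρ (x (Fin.last (n+1)) ⊗ₜ[ℂ] x 0)
                  else x k.castSucc)

/-- `f` vanishes whenever some argument in position `≥ 1` lies in the subalgebra
`1 ⊗ H` of `A ⋊ H`. -/
def HConstVanish {m : ℕ} (f : (Fin m → A ⊗[ℂ] H) → ℂ) : Prop :=
  ∀ x : Fin m → A ⊗[ℂ] H,
    (∃ j : Fin m, 0 < (j : ℕ) ∧ ∃ h : H, x j = (1 : A) ⊗ₜ[ℂ] h) → f x = 0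

/-- An `H`-constant cochain on `A ⋊ H`: both `f` and `bf` vanish whenever some
argument in position `≥ 1` lies in `1 ⊗ H`. -/
def IsHConstant (ρ : H →ₗ[ℂ] A →ₗ[ℂ] A) {n : ℕ}
    (f : MultilinearMap ℂ (fun _ : Fin (n+1) => A ⊗[ℂ] H) ℂ) : Prop :=
  HConstVanish ⇑f ∧ HConstVanish (cpb ρ ⇑f)

/-- Auxiliary recursion for `Ψ`: processes the pairs `x¹, …, xᵏ`, keeping an
accumulated Hopf algebra element `g`; at each step `Δg = g₍₁₎ ⊗ g₍₂₎` is split, the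
current slot becomes `g₍₁₎(aʲ)` and the accumulator becomes `g₍₂₎ hʲ`. -/
def psiAux (N : H → ℕ) (Δ₁ Δ₂ : H → ℕ → H) (ρ : H →ₗ[ℂ] A →ₗ[ℂ] A) :
    (k : ℕ) → H → (Fin k → A × H) → (H → (Fin k → A) → ℂ) → ℂ
  | 0, g, _, F => F g ![]
  | k+1, g, x, F => ∑ i ∈ Finset.range (N g),
      psiAux N Δ₁ Δ₂ ρ k (Δ₂ g i * (x 0).2) (fun j => x j.succ)
        (fun h v => F h (Fin.cons (ρ (Δ₁ g i) (x 0).1) v))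

/-- The value of `Ψφ` on the elementary tensors `a⁰ ⊗ h⁰, …, aⁿ ⊗ hⁿ`:
`Ψ(φ)(a⁰⊗h⁰, …, aⁿ⊗hⁿ) = φ(h⁰₍ₙ₊₁₎ ⋯ h^{n-1}₍₂₎ hⁿ, a⁰, h⁰₍₁₎(a¹), …,
h⁰₍ₙ₎⋯h^{n-1}₍₁₎(aⁿ))`. -/
def psiV (N : H → ℕ) (Δ₁ Δ₂ : H → ℕ → H) (ρ : H →ₗ[ℂ] A →ₗ[ℂ] A) {n : ℕ}
    (φf : H → (Fin (n+1) → A) → ℂ) (x : Fin (n+1) → A × H) : ℂ :=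
  psiAux N Δ₁ Δ₂ ρ n ((x 0).2) (fun j => x j.succ)
    (fun h v => φf h (Fin.cons (x 0).1 v))

/-- The equivariance condition `φ(S(g₍₂₎) h g₍₁₎, a⁰, …, aⁿ) =
φ(h, g₍₁₎(a⁰), …, g₍ₙ₊₁₎(aⁿ))` for a cochain `φ : H ⊗ A^{⊗(n+1)} → ℂ`. -/
def IsEquivariant (N : H → ℕ) (Δ₁ Δ₂ : H → ℕ → H) (ρ : H →ₗ[ℂ] A →ₗ[ℂ] A) {n : ℕ}
    (φf : H → (Fin (n+1) → A) → ℂ) : Prop :=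
  ∀ (g h : H) (a : Fin (n+1) → A),
    sweedler N Δ₁ Δ₂ 1 g
      (fun ℓ => φf (HopfAlgebra.antipode (R := ℂ) (ℓ 1) * h * ℓ 0) a)
      = sweedler N Δ₁ Δ₂ n g (fun ℓ => φf h (fun j => ρ (ℓ j) (a j)))

/-- The cyclic operator on equivariant cochains:
`t φ(h, a⁰, …, aⁿ) = φ(h₍₂₎, S⁻¹(h₍₁₎)(aⁿ), a⁰, …, aⁿ⁻¹)`. -/
def cycOpEq (N : H → ℕ) (Δ₁ Δ₂ : H → ℕ → H) (ρ : H →ₗ[ℂ] A →ₗ[ℂ] A)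
    (Sinv : H →ₗ[ℂ] H) {n : ℕ} (φf : H → (Fin (n+1) → A) → ℂ) :
    H → (Fin (n+1) → A) → ℂ := fun h a =>
  sweedler N Δ₁ Δ₂ 1 h (fun ℓ =>
    φf (ℓ 1) (Fin.cons (ρ (Sinv (ℓ 0)) (a (Fin.last n))) (fun j : Fin n => a j.castSucc)))

/-- The map `Φ`: `(Φf)(h, a⁰, …, aⁿ) = f(a⁰ ⊗ 1, …, aⁿ⁻¹ ⊗ 1, aⁿ ⊗ h)`. -/
def phiV {n : ℕ} (f : MultilinearMap ℂ (fun _ : Fin (n+1) => A ⊗[ℂ] H) ℂ) :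
    H → (Fin (n+1) → A) → ℂ := fun h a =>
  f (fun i => if i = Fin.last n then a i ⊗ₜ[ℂ] h else a i ⊗ₜ[ℂ] (1 : H))


section aux
variable (N : H → ℕ) (Δ₁ Δ₂ : H → ℕ → H)
variable (hrep : ∀ g : H, (Coalgebra.comul (R := ℂ) g : H ⊗[ℂ] H) =
      ∑ i ∈ Finset.range (N g), Δ₁ g i ⊗ₜ[ℂ] Δ₂ g i)

include hrep

section M
variable {M : Type} [AddCommMonoid M] [Module ℂ M]

lemma lift_comul_rep (B : H →ₗ[ℂ] H →ₗ[ℂ] M) (g : H) :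
    TensorProduct.lift B (Coalgebra.comul (R := ℂ) g) =
      ∑ i ∈ Finset.range (N g), B (Δ₁ g i) (Δ₂ g i) := by
  rw [hrep]; simp

/-- The coassociativity exchange for double Sweedler sums against a trilinear map. -/
lemma tri_exchange (T : H →ₗ[ℂ] H →ₗ[ℂ] H →ₗ[ℂ] M) (g : H) :
    ∑ i ∈ Finset.range (N g), ∑ j ∈ Finset.range (N (Δ₂ g i)),
        T (Δ₁ g i) (Δ₁ (Δ₂ g i) j) (Δ₂ (Δ₂ g i) j)
    = ∑ i ∈ Finset.range (N g), ∑ j ∈ Finset.range (N (Δ₁ g i)),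
        T (Δ₁ (Δ₁ g i) j) (Δ₂ (Δ₁ g i) j) (Δ₂ g i) := by
  have hB : ∀ u, TensorProduct.lift (T u) = TensorProduct.lift (T u) := fun _ => rfl
  set B₁ : H →ₗ[ℂ] (H ⊗[ℂ] H →ₗ[ℂ] M) :=
    { toFun := fun u => TensorProduct.lift (T u)
      map_add' := by intro x y; ext u v; simp
      map_smul' := by intro c x; ext u v; simp } with hB₁
  set Ψ : H ⊗[ℂ] (H ⊗[ℂ] H) →ₗ[ℂ] M := TensorProduct.lift B₁ with hΨ
  have h1 : ∑ i ∈ Finset.range (N g), ∑ j ∈ Finset.range (N (Δ₂ g i)),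
        T (Δ₁ g i) (Δ₁ (Δ₂ g i) j) (Δ₂ (Δ₂ g i) j)
      = Ψ ((Coalgebra.comul (R := ℂ)).lTensor H ((Coalgebra.comul (R := ℂ)) g)) := by
    rw [hrep g, map_sum, map_sum]
    refine Finset.sum_congr rfl fun i _ => ?_
    rw [LinearMap.lTensor_tmul, hΨ, TensorProduct.lift.tmul]
    simp only [hB₁, LinearMap.coe_mk, AddHom.coe_mk]
    rw [lift_comul_rep N Δ₁ Δ₂ hrep]
  have h2 : ∑ i ∈ Finset.range (N g), ∑ j ∈ Finset.range (N (Δ₁ g i)),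
        T (Δ₁ (Δ₁ g i) j) (Δ₂ (Δ₁ g i) j) (Δ₂ g i)
      = Ψ ((TensorProduct.assoc ℂ H H H)
          ((Coalgebra.comul (R := ℂ)).rTensor H ((Coalgebra.comul (R := ℂ)) g))) := by
    rw [hrep g, map_sum, map_sum, map_sum]
    refine Finset.sum_congr rfl fun i _ => ?_
    rw [LinearMap.rTensor_tmul, hrep (Δ₁ g i)]
    simp only [TensorProduct.sum_tmul, map_sum]
    refine Finset.sum_congr rfl fun j _ => ?_
    rw [TensorProduct.assoc_tmul, hΨ, TensorProduct.lift.tmul]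
    simp [hB₁]
  rw [h1, h2, Coalgebra.coassoc_apply]

end M

open Coalgebra HopfAlgebra in
/-- A `Coalgebra.Repr` built from the chosen representation. -/
def rep (g : H) : Coalgebra.Repr ℂ g ℕ where
  index := Finset.range (N g)
  left := Δ₁ g
  right := Δ₂ g
  eq := (hrep g).symm

open Coalgebra HopfAlgebra Bialgebra

lemma sum_S_mul (g : H) :
    ∑ i ∈ Finset.range (N g), antipode (R := ℂ) (Δ₁ g i) * Δ₂ g i = counit (R := ℂ) g • 1 :=
  sum_antipode_mul_eq_smul (rep N Δ₁ Δ₂ hrep g)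

lemma sum_mul_S (g : H) :
    ∑ i ∈ Finset.range (N g), Δ₁ g i * antipode (R := ℂ) (Δ₂ g i) = counit (R := ℂ) g • 1 :=
  sum_mul_antipode_eq_smul (rep N Δ₁ Δ₂ hrep g)

lemma sum_counit_left (g : H) :
    ∑ i ∈ Finset.range (N g), counit (R := ℂ) (Δ₁ g i) • Δ₂ g i = g := by
  have h := Coalgebra.sum_counit_tmul_eq (R := ℂ) (rep N Δ₁ Δ₂ hrep g)
  apply_fun (TensorProduct.lid ℂ H) at h
  simpa [map_sum, rep] using h

lemma sum_counit_right (g : H) :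
    ∑ i ∈ Finset.range (N g), counit (R := ℂ) (Δ₂ g i) • Δ₁ g i = g := by
  have h := Coalgebra.sum_tmul_counit_eq (R := ℂ) (rep N Δ₁ Δ₂ hrep g)
  apply_fun (TensorProduct.rid ℂ H) at h
  simpa [map_sum, rep] using h

/-- The candidate for `comul ∘ antipode`, namely `(S ⊗ S) ∘ swap ∘ comul`. -/
def gmap : H →ₗ[ℂ] H ⊗[ℂ] H :=
  (TensorProduct.map (antipode (R := ℂ)) (antipode (R := ℂ))) ∘ₗ
    (TensorProduct.comm ℂ H H).toLinearMap ∘ₗ (Coalgebra.comul (R := ℂ))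

lemma gmap_apply (g : H) : (gmap (H := H)) g =
    ∑ i ∈ Finset.range (N g), antipode (R := ℂ) (Δ₂ g i) ⊗ₜ[ℂ] antipode (R := ℂ) (Δ₁ g i) := by
  rw [gmap, LinearMap.comp_apply, LinearMap.comp_apply, hrep]
  simp

lemma conv_S_comul (x : H) :
    ∑ i ∈ Finset.range (N x),
      (Coalgebra.comul (R := ℂ) (antipode (R := ℂ) (Δ₁ x i))) * Coalgebra.comul (Δ₂ x i)
      = counit (R := ℂ) x • 1 := by
  have : ∀ i, (Coalgebra.comul (R := ℂ) (antipode (R := ℂ) (Δ₁ x i))) *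
      Coalgebra.comul (Δ₂ x i) = Coalgebra.comul (antipode (R := ℂ) (Δ₁ x i) * Δ₂ x i) := by
    intro i; rw [comul_mul]
  rw [Finset.sum_congr rfl fun i _ => this i, ← map_sum, sum_S_mul N Δ₁ Δ₂ hrep, map_smul,
    comul_one]

lemma conv_comul_gmap (x : H) :
    ∑ i ∈ Finset.range (N x),
      (Coalgebra.comul (R := ℂ) (Δ₁ x i)) * (gmap (H := H)) (Δ₂ x i)
      = counit (R := ℂ) x • 1 := by
  classical
  set S : H →ₗ[ℂ] H := antipode (R := ℂ) with hS
  set Ta : H →ₗ[ℂ] H →ₗ[ℂ] H →ₗ[ℂ] H ⊗[ℂ] H :=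
    LinearMap.mk₂ ℂ (fun u v => LinearMap.mulLeft ℂ (u ⊗ₜ[ℂ] v) ∘ₗ (gmap (H := H)))
      (by intro u u' v; ext w; simp [add_tmul, add_mul])
      (by intro c u v; ext w; simp only [LinearMap.comp_apply, LinearMap.mulLeft_apply,
        LinearMap.smul_apply, ← smul_tmul', smul_mul_assoc])
      (by intro u v v'; ext w; simp [tmul_add, add_mul])
      (by intro c u v; ext w; simp only [LinearMap.comp_apply, LinearMap.mulLeft_apply,
        LinearMap.smul_apply, tmul_smul, smul_mul_assoc]) with hTa
  have step0 : ∑ i ∈ Finset.range (N x),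
      (Coalgebra.comul (R := ℂ) (Δ₁ x i)) * (gmap (H := H)) (Δ₂ x i)
      = ∑ i ∈ Finset.range (N x), ∑ j ∈ Finset.range (N (Δ₁ x i)),
          Ta (Δ₁ (Δ₁ x i) j) (Δ₂ (Δ₁ x i) j) (Δ₂ x i) := by
    refine Finset.sum_congr rfl fun i _ => ?_
    rw [hrep (Δ₁ x i), Finset.sum_mul]
    exact Finset.sum_congr rfl fun j _ => by simp [hTa]
  rw [step0, ← tri_exchange N Δ₁ Δ₂ hrep Ta x]
  have key : ∀ (α y : H), ∑ j ∈ Finset.range (N y),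
      (α ⊗ₜ[ℂ] Δ₁ y j) * (gmap (H := H)) (Δ₂ y j) = (α * S y) ⊗ₜ[ℂ] 1 := by
    intro α y
    set T₂ : H →ₗ[ℂ] H →ₗ[ℂ] H →ₗ[ℂ] H ⊗[ℂ] H :=
      LinearMap.mk₂ ℂ (fun β p =>
          ((TensorProduct.mk ℂ H H).flip (β * S p)) ∘ₗ LinearMap.mulLeft ℂ α ∘ₗ S)
        (by intro β β' p; ext q; simp [add_mul, tmul_add])
        (by intro c β p; ext q; simp [smul_mul_assoc, tmul_smul])
        (by intro β p p'; ext q; simp [mul_add, tmul_add])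
        (by intro c β p; ext q; simp [mul_smul_comm, tmul_smul]) with hT₂
    have e1 : ∑ j ∈ Finset.range (N y),
        (α ⊗ₜ[ℂ] Δ₁ y j) * (gmap (H := H)) (Δ₂ y j)
        = ∑ j ∈ Finset.range (N y), ∑ k ∈ Finset.range (N (Δ₂ y j)),
            T₂ (Δ₁ y j) (Δ₁ (Δ₂ y j) k) (Δ₂ (Δ₂ y j) k) := by
      refine Finset.sum_congr rfl fun j _ => ?_
      rw [gmap_apply N Δ₁ Δ₂ hrep, Finset.mul_sum]
      refine Finset.sum_congr rfl fun k _ => ?_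
      simp [hT₂, hS, Algebra.TensorProduct.tmul_mul_tmul]
    rw [e1, tri_exchange N Δ₁ Δ₂ hrep T₂ y]
    set L : H →ₗ[ℂ] H ⊗[ℂ] H :=
      ((TensorProduct.mk ℂ H H).flip 1) ∘ₗ LinearMap.mulLeft ℂ α ∘ₗ S with hL
    have e2 : ∀ j, ∑ k ∈ Finset.range (N (Δ₁ y j)),
        T₂ (Δ₁ (Δ₁ y j) k) (Δ₂ (Δ₁ y j) k) (Δ₂ y j)
        = counit (R := ℂ) (Δ₁ y j) • L (Δ₂ y j) := by
      intro j
      have : ∀ k, T₂ (Δ₁ (Δ₁ y j) k) (Δ₂ (Δ₁ y j) k) (Δ₂ y j)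
          = (α * S (Δ₂ y j)) ⊗ₜ[ℂ] (Δ₁ (Δ₁ y j) k * S (Δ₂ (Δ₁ y j) k)) := by
        intro k; simp [hT₂]
      rw [Finset.sum_congr rfl fun k _ => this k, ← tmul_sum,
        sum_mul_S N Δ₁ Δ₂ hrep (Δ₁ y j), tmul_smul]
      simp [hL]
    rw [Finset.sum_congr rfl fun j _ => e2 j]
    calc ∑ j ∈ Finset.range (N y), counit (R := ℂ) (Δ₁ y j) • L (Δ₂ y j)
        = L (∑ j ∈ Finset.range (N y), counit (R := ℂ) (Δ₁ y j) • Δ₂ y j) := by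
          rw [map_sum]; exact Finset.sum_congr rfl fun j _ => (map_smul L _ _).symm
      _ = L y := by rw [sum_counit_left N Δ₁ Δ₂ hrep y]
      _ = (α * S y) ⊗ₜ[ℂ] 1 := by simp [hL]
  have e3 : ∀ i, ∑ j ∈ Finset.range (N (Δ₂ x i)),
      Ta (Δ₁ x i) (Δ₁ (Δ₂ x i) j) (Δ₂ (Δ₂ x i) j)
      = (Δ₁ x i * S (Δ₂ x i)) ⊗ₜ[ℂ] 1 := by
    intro i
    rw [← key (Δ₁ x i) (Δ₂ x i)]
    exact Finset.sum_congr rfl fun j _ => by simp [hTa]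
  rw [Finset.sum_congr rfl fun i _ => e3 i, ← TensorProduct.sum_tmul,
    sum_mul_S N Δ₁ Δ₂ hrep x, ← TensorProduct.smul_tmul', ← Algebra.TensorProduct.one_def]

lemma comul_S (x : H) :
    Coalgebra.comul (R := ℂ) (antipode (R := ℂ) x) = (gmap (H := H)) x := by
  classical
  set S : H →ₗ[ℂ] H := antipode (R := ℂ) with hS
  set T₃ : H →ₗ[ℂ] H →ₗ[ℂ] H →ₗ[ℂ] H ⊗[ℂ] H :=
    LinearMap.mk₂ ℂ (fun u v =>
        LinearMap.mulLeft ℂ (Coalgebra.comul (R := ℂ) (S u) * Coalgebra.comul (R := ℂ) v)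
          ∘ₗ (gmap (H := H)))
      (by intro u u' v; ext w; simp [add_mul, mul_assoc])
      (by intro c u v; ext w; simp [smul_mul_assoc, mul_assoc])
      (by intro u v v'; ext w; simp [mul_add, add_mul, mul_assoc])
      (by intro c u v; ext w; simp [mul_smul_comm, smul_mul_assoc, mul_assoc]) with hT₃
  have way1 : ∑ i ∈ Finset.range (N x), ∑ j ∈ Finset.range (N (Δ₂ x i)),
      T₃ (Δ₁ x i) (Δ₁ (Δ₂ x i) j) (Δ₂ (Δ₂ x i) j)
      = Coalgebra.comul (R := ℂ) (S x) := by
    have inner : ∀ i, ∑ j ∈ Finset.range (N (Δ₂ x i)),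
        T₃ (Δ₁ x i) (Δ₁ (Δ₂ x i) j) (Δ₂ (Δ₂ x i) j)
        = counit (R := ℂ) (Δ₂ x i) • Coalgebra.comul (R := ℂ) (S (Δ₁ x i)) := by
      intro i
      have h : ∀ j, T₃ (Δ₁ x i) (Δ₁ (Δ₂ x i) j) (Δ₂ (Δ₂ x i) j)
          = Coalgebra.comul (R := ℂ) (S (Δ₁ x i)) *
              (Coalgebra.comul (R := ℂ) (Δ₁ (Δ₂ x i) j) * (gmap (H := H)) (Δ₂ (Δ₂ x i) j)) := by
        intro j; simp [hT₃, mul_assoc]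
      rw [Finset.sum_congr rfl fun j _ => h j, ← Finset.mul_sum,
        conv_comul_gmap N Δ₁ Δ₂ hrep (Δ₂ x i), mul_smul_comm, mul_one]
    rw [Finset.sum_congr rfl fun i _ => inner i]
    have : ∑ i ∈ Finset.range (N x),
        counit (R := ℂ) (Δ₂ x i) • Coalgebra.comul (R := ℂ) (S (Δ₁ x i))
        = Coalgebra.comul (R := ℂ)
            (S (∑ i ∈ Finset.range (N x), counit (R := ℂ) (Δ₂ x i) • Δ₁ x i)) := by
      rw [map_sum, map_sum]
      exact Finset.sum_congr rfl fun i _ => by rw [map_smul, map_smul]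
    rw [this, sum_counit_right N Δ₁ Δ₂ hrep x]
  have way2 : ∑ i ∈ Finset.range (N x), ∑ j ∈ Finset.range (N (Δ₂ x i)),
      T₃ (Δ₁ x i) (Δ₁ (Δ₂ x i) j) (Δ₂ (Δ₂ x i) j)
      = (gmap (H := H)) x := by
    rw [tri_exchange N Δ₁ Δ₂ hrep T₃ x]
    have inner : ∀ i, ∑ j ∈ Finset.range (N (Δ₁ x i)),
        T₃ (Δ₁ (Δ₁ x i) j) (Δ₂ (Δ₁ x i) j) (Δ₂ x i)
        = counit (R := ℂ) (Δ₁ x i) • (gmap (H := H)) (Δ₂ x i) := by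
      intro i
      have h : ∀ j, T₃ (Δ₁ (Δ₁ x i) j) (Δ₂ (Δ₁ x i) j) (Δ₂ x i)
          = (Coalgebra.comul (R := ℂ) (S (Δ₁ (Δ₁ x i) j)) *
              Coalgebra.comul (R := ℂ) (Δ₂ (Δ₁ x i) j)) * (gmap (H := H)) (Δ₂ x i) := by
        intro j; simp [hT₃, mul_assoc]
      rw [Finset.sum_congr rfl fun j _ => h j, ← Finset.sum_mul,
        conv_S_comul N Δ₁ Δ₂ hrep (Δ₁ x i), smul_mul_assoc, one_mul]
    rw [Finset.sum_congr rfl fun i _ => inner i]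
    have : ∑ i ∈ Finset.range (N x), counit (R := ℂ) (Δ₁ x i) • (gmap (H := H)) (Δ₂ x i)
        = (gmap (H := H)) (∑ i ∈ Finset.range (N x), counit (R := ℂ) (Δ₁ x i) • Δ₂ x i) := by
      rw [map_sum]
      exact Finset.sum_congr rfl fun i _ => (map_smul _ _ _).symm
    rw [this, sum_counit_left N Δ₁ Δ₂ hrep x]
  rw [← way1, way2]

lemma counit_S (x : H) :
    counit (R := ℂ) (antipode (R := ℂ) x) = counit (R := ℂ) x := by
  have h := congrArg (counit (R := ℂ)) (sum_S_mul N Δ₁ Δ₂ hrep x)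
  rw [map_sum, map_smul, counit_one, smul_eq_mul, mul_one] at h
  have h2 : counit (R := ℂ) (antipode (R := ℂ) x)
      = ∑ i ∈ Finset.range (N x),
          counit (R := ℂ) (antipode (R := ℂ) (Δ₁ x i)) * counit (R := ℂ) (Δ₂ x i) := by
    conv_lhs => rw [← sum_counit_right N Δ₁ Δ₂ hrep x]
    rw [map_sum, map_sum]
    refine Finset.sum_congr rfl fun i _ => ?_
    simp only [map_smul, smul_eq_mul]; ring
  rw [h2, ← h]
  exact Finset.sum_congr rfl fun i _ => (counit_mul _ _).symm

section Sinv
variable (Sinv : H →ₗ[ℂ] H)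
variable (hSinv : ∀ h : H, Sinv (HopfAlgebra.antipode (R := ℂ) h) = h ∧
      HopfAlgebra.antipode (R := ℂ) (Sinv h) = h)
include hSinv

lemma counit_Sinv (x : H) : counit (R := ℂ) (Sinv x) = counit (R := ℂ) x := by
  conv_rhs => rw [← (hSinv x).2, counit_S N Δ₁ Δ₂ hrep]

lemma comul_x_eq_gmap_Sinv (x : H) :
    Coalgebra.comul (R := ℂ) x = (gmap (H := H)) (Sinv x) := by
  conv_lhs => rw [← (hSinv x).2, comul_S N Δ₁ Δ₂ hrep]

lemma comul_Sinv (x : H) :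
    Coalgebra.comul (R := ℂ) (Sinv x)
      = ∑ i ∈ Finset.range (N x), Sinv (Δ₂ x i) ⊗ₜ[ℂ] Sinv (Δ₁ x i) := by
  have aux : ∀ z : H ⊗[ℂ] H,
      (TensorProduct.map Sinv Sinv) ((TensorProduct.comm ℂ H H)
        ((TensorProduct.map (antipode (R := ℂ)) (antipode (R := ℂ)))
          ((TensorProduct.comm ℂ H H) z))) = z := by
    intro z
    induction z using TensorProduct.induction_on with
    | zero => simp
    | tmul a b => simp [(hSinv a).1, (hSinv b).1]
    | add u v hu hv => simp only [map_add, hu, hv]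
  have h2 : ∑ i ∈ Finset.range (N x), Sinv (Δ₂ x i) ⊗ₜ[ℂ] Sinv (Δ₁ x i)
      = (TensorProduct.map Sinv Sinv)
          ((TensorProduct.comm ℂ H H) (Coalgebra.comul (R := ℂ) x)) := by
    rw [hrep x]; simp
  rw [h2, comul_x_eq_gmap_Sinv N Δ₁ Δ₂ hrep Sinv hSinv x, gmap]
  simp only [LinearMap.comp_apply, LinearEquiv.coe_coe]
  exact (aux _).symm

lemma sum_mul_Sinv (x : H) :
    ∑ i ∈ Finset.range (N x), Δ₂ x i * Sinv (Δ₁ x i) = counit (R := ℂ) x • 1 := by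
  set B : H →ₗ[ℂ] H →ₗ[ℂ] H :=
    LinearMap.mk₂ ℂ (fun p q => q * Sinv p)
      (by intro p p' q; simp [mul_add])
      (by intro c p q; simp [mul_smul_comm])
      (by intro p q q'; simp [add_mul])
      (by intro c p q; simp [smul_mul_assoc]) with hB
  have h0 : ∑ i ∈ Finset.range (N x), Δ₂ x i * Sinv (Δ₁ x i)
      = TensorProduct.lift B (Coalgebra.comul (R := ℂ) x) := by
    rw [lift_comul_rep N Δ₁ Δ₂ hrep B x]
    exact Finset.sum_congr rfl fun i _ => by simp [hB]
  rw [h0, comul_x_eq_gmap_Sinv N Δ₁ Δ₂ hrep Sinv hSinv x,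
    gmap_apply N Δ₁ Δ₂ hrep (Sinv x), map_sum]
  have h1 : ∀ j, TensorProduct.lift B
      (antipode (R := ℂ) (Δ₂ (Sinv x) j) ⊗ₜ[ℂ] antipode (R := ℂ) (Δ₁ (Sinv x) j))
      = antipode (R := ℂ) (Δ₁ (Sinv x) j) * Δ₂ (Sinv x) j := by
    intro j; simp [hB, (hSinv _).1]
  rw [Finset.sum_congr rfl fun j _ => h1 j, sum_S_mul N Δ₁ Δ₂ hrep (Sinv x),
    counit_Sinv N Δ₁ Δ₂ hrep Sinv hSinv x]

end Sinv
section PlFramework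

omit hrep in
/-- Pointwise congruence for `sweedler`. -/
lemma sweedler_congr :
    ∀ (k : ℕ) (g : H) (F G : (Fin (k+1) → H) → ℂ), (∀ ℓ, F ℓ = G ℓ) →
      sweedler N Δ₁ Δ₂ k g F = sweedler N Δ₁ Δ₂ k g G
  | 0, g, F, G, h => h ![g]
  | k+1, g, F, G, h => by
    rw [sweedler, sweedler]
    exact Finset.sum_congr rfl fun i _ =>
      sweedler_congr k (Δ₂ g i) _ _ fun v => h _

omit hrep in
lemma lift_add'' {M : Type} [AddCommMonoid M] [Module ℂ M] (B B' : H →ₗ[ℂ] H →ₗ[ℂ] M) :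
    TensorProduct.lift (B + B') = TensorProduct.lift B + TensorProduct.lift B' := by
  apply TensorProduct.ext'; intro x y; simp

omit hrep in
lemma lift_smul'' {M : Type} [AddCommMonoid M] [Module ℂ M] (c : ℂ)
    (B : H →ₗ[ℂ] H →ₗ[ℂ] M) :
    TensorProduct.lift (c • B) = c • TensorProduct.lift B := by
  apply TensorProduct.ext'; intro x y; simp

/-- The canonical (representation-independent) Sweedler evaluation of a multilinear
functional against the iterated comultiplication, linearly in the functional. -/
def Pl : (k : ℕ) → (MultilinearMap ℂ (fun _ : Fin (k+1) => H) ℂ) →ₗ[ℂ] (H →ₗ[ℂ] ℂ)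
  | 0 =>
    { toFun := fun Λ => (MultilinearMap.ofSubsingleton ℂ H ℂ (0 : Fin 1)).symm Λ
      map_add' := fun _ _ => rfl
      map_smul' := fun _ _ => rfl }
  | k+1 =>
    { toFun := fun Λ =>
        (TensorProduct.lift ((Pl k) ∘ₗ Λ.curryLeft)) ∘ₗ (Coalgebra.comul (R := ℂ))
      map_add' := fun Λ Λ' => by
        rw [show (Λ + Λ').curryLeft = Λ.curryLeft + Λ'.curryLeft from rfl,
          LinearMap.comp_add, lift_add'', LinearMap.add_comp]
      map_smul' := fun c Λ => by
        rw [show (c • Λ).curryLeft = c • Λ.curryLeft from rfl,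
          LinearMap.comp_smul, lift_smul'', LinearMap.smul_comp]
        rfl }

omit hrep in
lemma Pl_zero_apply (Λ : MultilinearMap ℂ (fun _ : Fin 1 => H) ℂ) (g : H) :
    Pl 0 Λ g = Λ (fun _ => g) := rfl

lemma Pl_succ_apply (k : ℕ) (Λ : MultilinearMap ℂ (fun _ : Fin (k+2) => H) ℂ) (g : H) :
    Pl (k+1) Λ g = ∑ i ∈ Finset.range (N g), Pl k (Λ.curryLeft (Δ₁ g i)) (Δ₂ g i) := by
  show ((TensorProduct.lift ((Pl k) ∘ₗ Λ.curryLeft)) ∘ₗ (Coalgebra.comul (R := ℂ))) g = _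
  rw [LinearMap.comp_apply, lift_comul_rep N Δ₁ Δ₂ hrep]
  rfl

lemma sweedler_eq_Pl : ∀ (k : ℕ) (Λ : MultilinearMap ℂ (fun _ : Fin (k+1) => H) ℂ) (g : H),
    sweedler N Δ₁ Δ₂ k g ⇑Λ = Pl k Λ g
  | 0, Λ, g => by
    show Λ ![g] = Λ (fun _ => g)
    refine congrArg Λ ?_
    funext i
    rw [Subsingleton.elim i (0 : Fin 1)]
    rfl
  | k+1, Λ, g => by
    rw [sweedler, Pl_succ_apply N Δ₁ Δ₂ hrep]
    refine Finset.sum_congr rfl fun i _ => ?_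
    rw [← sweedler_eq_Pl k (Λ.curryLeft (Δ₁ g i)) (Δ₂ g i)]
    exact sweedler_congr N Δ₁ Δ₂ k (Δ₂ g i) _ _ fun v => rfl

omit hrep in
/-- Plugging an element into the last slot of a multilinear functional, linearly. -/
def endCur {k : ℕ} (Λ : MultilinearMap ℂ (fun _ : Fin (k+2) => H) ℂ) :
    H →ₗ[ℂ] MultilinearMap ℂ (fun _ : Fin (k+1) => H) ℂ where
  toFun w := (LinearMap.applyₗ w).compMultilinearMap Λ.curryRight
  map_add' w w' := by ext ℓ; simp
  map_smul' c w := by ext ℓ; simp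

omit hrep in
lemma endCur_apply {k : ℕ} (Λ : MultilinearMap ℂ (fun _ : Fin (k+2) => H) ℂ)
    (w : H) (ℓ : Fin (k+1) → H) : endCur Λ w ℓ = Λ (Fin.snoc ℓ w) := rfl

omit hrep in
lemma endCur_add {k : ℕ} (Λ Λ' : MultilinearMap ℂ (fun _ : Fin (k+2) => H) ℂ) (w : H) :
    endCur (Λ + Λ') w = endCur Λ w + endCur Λ' w := by
  ext ℓ; simp [endCur_apply]

omit hrep in
lemma endCur_smul {k : ℕ} (c : ℂ) (Λ : MultilinearMap ℂ (fun _ : Fin (k+2) => H) ℂ) (w : H) :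
    endCur (c • Λ) w = c • endCur Λ w := by
  ext ℓ; simp [endCur_apply]

omit hrep in
lemma curryLeft_endCur {k : ℕ} (Λ : MultilinearMap ℂ (fun _ : Fin (k+3) => H) ℂ)
    (u w : H) : endCur (Λ.curryLeft u) w = (endCur Λ w).curryLeft u := by
  ext ℓ
  rw [endCur_apply, MultilinearMap.curryLeft_apply, MultilinearMap.curryLeft_apply,
    endCur_apply, Fin.cons_snoc_eq_snoc_cons]

lemma lastSplit : ∀ (k : ℕ) (Λ : MultilinearMap ℂ (fun _ : Fin (k+2) => H) ℂ) (g : H),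
    Pl (k+1) Λ g = ∑ i ∈ Finset.range (N g), Pl k (endCur Λ (Δ₂ g i)) (Δ₁ g i)
  | 0, Λ, g => by
    rw [Pl_succ_apply N Δ₁ Δ₂ hrep]
    refine Finset.sum_congr rfl fun i _ => ?_
    rw [Pl_zero_apply, Pl_zero_apply, MultilinearMap.curryLeft_apply, endCur_apply]
    refine congrArg Λ ?_
    funext j
    rcases Fin.eq_zero_or_eq_succ j with h | ⟨j', rfl⟩
    · subst h; simp [Fin.snoc]
    · simp [Fin.snoc, Fin.fin_one_eq_zero j']
  | k+1, Λ, g => by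
    rw [Pl_succ_apply N Δ₁ Δ₂ hrep]
    have e1 : ∀ i, Pl (k+1) (Λ.curryLeft (Δ₁ g i)) (Δ₂ g i)
        = ∑ j ∈ Finset.range (N (Δ₂ g i)),
            Pl k (endCur (Λ.curryLeft (Δ₁ g i)) (Δ₂ (Δ₂ g i) j)) (Δ₁ (Δ₂ g i) j) :=
      fun i => lastSplit k (Λ.curryLeft (Δ₁ g i)) (Δ₂ g i)
    rw [Finset.sum_congr rfl fun i _ => e1 i]
    set B : H →ₗ[ℂ] H →ₗ[ℂ] (H →ₗ[ℂ] ℂ) :=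
      LinearMap.mk₂ ℂ (fun u w => Pl k (endCur (Λ.curryLeft u) w))
        (by intro u u' w
            rw [show (Λ.curryLeft (u + u')) = Λ.curryLeft u + Λ.curryLeft u' from
              Λ.curryLeft.map_add u u', endCur_add, map_add])
        (by intro c u w
            rw [show (Λ.curryLeft (c • u)) = c • Λ.curryLeft u from
              Λ.curryLeft.map_smul c u, endCur_smul, map_smul])
        (by intro u w w'
            rw [(endCur (Λ.curryLeft u)).map_add, map_add])
        (by intro c u w
            rw [(endCur (Λ.curryLeft u)).map_smul, map_smul]) with hB
    set T : H →ₗ[ℂ] H →ₗ[ℂ] H →ₗ[ℂ] ℂ := (LinearMap.lflip (R₀ := ℂ)).toLinearMap ∘ₗ B with hT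
    have e2 : ∀ i j, Pl k (endCur (Λ.curryLeft (Δ₁ g i)) (Δ₂ (Δ₂ g i) j)) (Δ₁ (Δ₂ g i) j)
        = T (Δ₁ g i) (Δ₁ (Δ₂ g i) j) (Δ₂ (Δ₂ g i) j) := fun i j => rfl
    rw [Finset.sum_congr rfl fun i _ =>
      Finset.sum_congr rfl fun j _ => e2 i j, tri_exchange N Δ₁ Δ₂ hrep T g]
    refine Finset.sum_congr rfl fun i _ => ?_
    rw [Pl_succ_apply N Δ₁ Δ₂ hrep k (endCur Λ (Δ₂ g i)) (Δ₁ g i)]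
    refine Finset.sum_congr rfl fun j _ => ?_
    show Pl k (endCur (Λ.curryLeft (Δ₁ (Δ₁ g i) j)) (Δ₂ g i)) (Δ₂ (Δ₁ g i) j) = _
    rw [curryLeft_endCur]

end PlFramework

section Rev
variable (Sinv : H →ₗ[ℂ] H)
variable (hSinv : ∀ h : H, Sinv (HopfAlgebra.antipode (R := ℂ) h) = h ∧
      HopfAlgebra.antipode (R := ℂ) (Sinv h) = h)

omit hrep in
/-- Reverse the slots of a multilinear functional and twist each by `S⁻¹`. -/
def revCur {k : ℕ} (Λ : MultilinearMap ℂ (fun _ : Fin (k+1) => H) ℂ) :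
    MultilinearMap ℂ (fun _ : Fin (k+1) => H) ℂ :=
  (Λ.compLinearMap (fun _ => Sinv)).domDomCongr (Fin.revPerm)

omit hrep in
lemma revCur_apply {k : ℕ} (Λ : MultilinearMap ℂ (fun _ : Fin (k+1) => H) ℂ)
    (ℓ : Fin (k+1) → H) :
    revCur Sinv Λ ℓ = Λ (fun j => Sinv (ℓ (Fin.rev j))) := rfl

omit hrep in
lemma curryLeft_revCur {k : ℕ} (Λ : MultilinearMap ℂ (fun _ : Fin (k+2) => H) ℂ)
    (u : H) :
    (revCur Sinv Λ).curryLeft u = revCur Sinv (endCur Λ (Sinv u)) := by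
  ext ℓ
  rw [MultilinearMap.curryLeft_apply, revCur_apply, revCur_apply, endCur_apply]
  refine congrArg Λ ?_
  funext j
  induction j using Fin.lastCases with
  | last => simp
  | cast j' => rw [Fin.snoc_castSucc, Fin.rev_castSucc, Fin.cons_succ]

include hSinv in
lemma Pl_revCur : ∀ (k : ℕ) (Λ : MultilinearMap ℂ (fun _ : Fin (k+1) => H) ℂ) (x : H),
    Pl k (revCur Sinv Λ) x = Pl k Λ (Sinv x)
  | 0, Λ, x => by
    rw [Pl_zero_apply, Pl_zero_apply, revCur_apply]
  | k+1, Λ, x => by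
    rw [Pl_succ_apply N Δ₁ Δ₂ hrep]
    have e1 : ∀ i, Pl k ((revCur Sinv Λ).curryLeft (Δ₁ x i)) (Δ₂ x i)
        = Pl k (endCur Λ (Sinv (Δ₁ x i))) (Sinv (Δ₂ x i)) := by
      intro i
      rw [curryLeft_revCur, Pl_revCur k]
    rw [Finset.sum_congr rfl fun i _ => e1 i]
    set B : H →ₗ[ℂ] H →ₗ[ℂ] ℂ :=
      LinearMap.mk₂ ℂ (fun p q => Pl k (endCur Λ q) p)
        (by intro p p' q; rw [map_add])
        (by intro c p q; rw [map_smul])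
        (by intro p q q'; rw [(endCur Λ).map_add, map_add]; rfl)
        (by intro c p q; rw [(endCur Λ).map_smul, map_smul]; rfl) with hB
    have e2 : ∑ i ∈ Finset.range (N x),
        Pl k (endCur Λ (Sinv (Δ₁ x i))) (Sinv (Δ₂ x i))
        = TensorProduct.lift B (Coalgebra.comul (R := ℂ) (Sinv x)) := by
      rw [comul_Sinv N Δ₁ Δ₂ hrep Sinv hSinv x, map_sum]
      exact Finset.sum_congr rfl fun i _ => rfl
    rw [e2, lift_comul_rep N Δ₁ Δ₂ hrep B (Sinv x),
      lastSplit N Δ₁ Δ₂ hrep k Λ (Sinv x)]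
    exact Finset.sum_congr rfl fun j _ => rfl

end Rev

section SnocCurA

omit hrep in
/-- The multilinear functional `ℓ ↦ f (ℓ last) (init ℓ)` built from a linear family. -/
def snocCur {k : ℕ} (f : H →ₗ[ℂ] MultilinearMap ℂ (fun _ : Fin (k+1) => H) ℂ) :
    MultilinearMap ℂ (fun _ : Fin (k+2) => H) ℂ :=
  MultilinearMap.uncurryRight
    { toFun := fun ℓ =>
        { toFun := fun w => f w ℓ
          map_add' := fun w w' => by rw [map_add]; rfl
          map_smul' := fun c w => by rw [map_smul]; rfl }
      map_update_add' := fun ℓ i x y => by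
        ext w; exact (f w).map_update_add ℓ i x y
      map_update_smul' := fun ℓ i c x => by
        ext w; exact (f w).map_update_smul ℓ i c x }

omit hrep in
lemma snocCur_apply {k : ℕ} (f : H →ₗ[ℂ] MultilinearMap ℂ (fun _ : Fin (k+1) => H) ℂ)
    (ℓ : Fin (k+2) → H) :
    snocCur f ℓ = f (ℓ (Fin.last (k+1))) (Fin.init ℓ) := rfl

omit hrep in
lemma endCur_snocCur {k : ℕ} (f : H →ₗ[ℂ] MultilinearMap ℂ (fun _ : Fin (k+1) => H) ℂ)
    (w : H) : endCur (snocCur f) w = f w := by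
  ext ℓ
  rw [endCur_apply, snocCur_apply]
  rw [Fin.snoc_last, Fin.init_snoc]

omit hrep in
/-- Twist each slot of a multilinear functional on `A` by the action `ρ` on fixed
elements `c j`, yielding a multilinear functional on `H`. -/
def curA (ρ : H →ₗ[ℂ] A →ₗ[ℂ] A) {k : ℕ} (c : Fin (k+1) → A) :
    MultilinearMap ℂ (fun _ : Fin (k+1) => A) ℂ →ₗ[ℂ]
      MultilinearMap ℂ (fun _ : Fin (k+1) => H) ℂ where
  toFun ψ := ψ.compLinearMap (fun j => ρ.flip (c j))
  map_add' ψ ψ' := by ext ℓ; simp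
  map_smul' c' ψ := by ext ℓ; simp

omit hrep in
lemma curA_apply (ρ : H →ₗ[ℂ] A →ₗ[ℂ] A) {k : ℕ} (c : Fin (k+1) → A)
    (ψ : MultilinearMap ℂ (fun _ : Fin (k+1) => A) ℂ) (ℓ : Fin (k+1) → H) :
    curA ρ c ψ ℓ = ψ (fun j => ρ (ℓ j) (c j)) := rfl

omit hrep in
lemma revCur_add (Sinv : H →ₗ[ℂ] H) {k : ℕ}
    (Λ Λ' : MultilinearMap ℂ (fun _ : Fin (k+1) => H) ℂ) :
    revCur Sinv (Λ + Λ') = revCur Sinv Λ + revCur Sinv Λ' := by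
  ext ℓ; simp [revCur_apply]

omit hrep in
lemma revCur_smul (Sinv : H →ₗ[ℂ] H) {k : ℕ} (c : ℂ)
    (Λ : MultilinearMap ℂ (fun _ : Fin (k+1) => H) ℂ) :
    revCur Sinv (c • Λ) = c • revCur Sinv Λ := by
  ext ℓ; simp [revCur_apply]

end SnocCurA

section Iter

variable {n : ℕ} (ρ : H →ₗ[ℂ] A →ₗ[ℂ] A) (Sinv : H →ₗ[ℂ] H)
variable (φ : H →ₗ[ℂ] MultilinearMap ℂ (fun _ : Fin (n+1) => A) ℂ)

omit hrep in
/-- The argument configuration after `m` applications of the cyclic operator. -/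
def cfg (m : ℕ) (hm : m ≤ n+1) (ℓ : Fin (m+1) → H) (a : Fin (n+1) → A) :
    Fin (n+1) → A := fun j =>
  if hj : (j : ℕ) < m
    then ρ (Sinv (ℓ ⟨m-1-(j:ℕ), by omega⟩)) (a ⟨n+1-m+(j:ℕ), by omega⟩)
    else a ⟨(j:ℕ)-m, by have := j.isLt; omega⟩

omit hrep in
lemma iterFormula : ∀ (m : ℕ) (hm : m ≤ n+1) (h : H) (a : Fin (n+1) → A),
    (cycOpEq N Δ₁ Δ₂ ρ Sinv)^[m] (fun h' a' => φ h' a') h a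
      = sweedler N Δ₁ Δ₂ m h (fun ℓ => φ (ℓ (Fin.last m)) (cfg ρ Sinv m hm ℓ a))
  | 0, hm, h, a => by
    show φ h a = φ (![h] (Fin.last 0)) (cfg ρ Sinv 0 hm ![h] a)
    have h1 : ![h] (Fin.last 0) = h := rfl
    have h2 : cfg ρ Sinv 0 hm ![h] a = a := by
      funext j
      simp only [cfg, Nat.not_lt_zero, dif_neg, not_false_iff, Nat.sub_zero, Fin.eta]
    rw [h1, h2]
  | m+1, hm, h, a => by
    rw [Function.iterate_succ_apply']
    show sweedler N Δ₁ Δ₂ 1 h _ = sweedler N Δ₁ Δ₂ (m+1) h _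
    rw [sweedler, sweedler]
    refine Finset.sum_congr rfl fun i _ => ?_
    show ((cycOpEq N Δ₁ Δ₂ ρ Sinv)^[m] (fun h' a' => φ h' a')) (Δ₂ h i)
        (Fin.cons (ρ (Sinv (Δ₁ h i)) (a (Fin.last n))) (fun j : Fin n => a j.castSucc))
      = sweedler N Δ₁ Δ₂ m (Δ₂ h i)
          (fun v => φ ((Fin.cons (Δ₁ h i) v : Fin (m+2) → H) (Fin.last (m+1)))
            (cfg ρ Sinv (m+1) hm (Fin.cons (Δ₁ h i) v) a))
    rw [iterFormula m (by omega) (Δ₂ h i) _]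
    refine sweedler_congr N Δ₁ Δ₂ m (Δ₂ h i) _ _ fun v => ?_
    set b : Fin (n+1) → A :=
      Fin.cons (ρ (Sinv (Δ₁ h i)) (a (Fin.last n))) (fun j : Fin n => a j.castSucc) with hb
    have harg1 : (Fin.cons (Δ₁ h i) v : Fin (m+2) → H) (Fin.last (m+1)) = v (Fin.last m) := by
      rw [← Fin.succ_last, Fin.cons_succ]
    rw [harg1]
    refine congrArg (φ (v (Fin.last m))) ?_
    funext j
    have hjn : (j : ℕ) < n + 1 := j.isLt
    have hmn : m ≤ n := by omega
    rcases lt_trichotomy (j : ℕ) m with hj | hj | hj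
    · -- j < m
      have hj' : (j : ℕ) < m + 1 := by omega
      simp only [cfg, dif_pos hj, dif_pos hj']
      have e1 : (⟨m+1-1-(j:ℕ), by omega⟩ : Fin (m+2))
          = Fin.succ ⟨m-1-(j:ℕ), by omega⟩ := by
        simp only [Fin.ext_iff, Fin.val_succ, Fin.val_last, Fin.val_zero,
          Fin.castSucc_mk, Fin.val_mk]; omega
      have e2 : b ⟨n+1-m+(j:ℕ), by omega⟩ = a ⟨n+1-(m+1)+(j:ℕ), by omega⟩ := by
        have e3 : (⟨n+1-m+(j:ℕ), by omega⟩ : Fin (n+1))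
            = Fin.succ ⟨n-m+(j:ℕ), by omega⟩ := by
          simp only [Fin.ext_iff, Fin.val_succ, Fin.val_last, Fin.val_zero,
          Fin.castSucc_mk, Fin.val_mk]; omega
        rw [hb, e3, Fin.cons_succ]
        show a (Fin.castSucc ⟨n-m+(j:ℕ), by omega⟩) = _
        congr 1
        simp only [Fin.ext_iff, Fin.val_succ, Fin.val_last, Fin.val_zero,
          Fin.castSucc_mk, Fin.val_mk]; omega
      rw [e1, Fin.cons_succ, e2]
    · -- j = m
      have hj1 : ¬ ((j : ℕ) < m) := by omega
      have hj2 : (j : ℕ) < m + 1 := by omega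
      simp only [cfg, dif_neg hj1, dif_pos hj2]
      have e1 : (⟨m+1-1-(j:ℕ), by omega⟩ : Fin (m+2)) = 0 := by
        simp only [Fin.ext_iff, Fin.val_succ, Fin.val_last, Fin.val_zero,
          Fin.castSucc_mk, Fin.val_mk]; omega
      have e2 : b ⟨(j:ℕ)-m, by have := j.isLt; omega⟩
          = ρ (Sinv (Δ₁ h i)) (a (Fin.last n)) := by
        have e3 : (⟨(j:ℕ)-m, by have := j.isLt; omega⟩ : Fin (n+1)) = 0 := by
          simp only [Fin.ext_iff, Fin.val_succ, Fin.val_last, Fin.val_zero,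
          Fin.castSucc_mk, Fin.val_mk]; omega
        rw [hb, e3, Fin.cons_zero]
      have e4 : (⟨n+1-(m+1)+(j:ℕ), by omega⟩ : Fin (n+1)) = Fin.last n := by
        simp only [Fin.ext_iff, Fin.val_succ, Fin.val_last, Fin.val_zero,
          Fin.castSucc_mk, Fin.val_mk]; omega
      rw [e1, Fin.cons_zero, e2, e4]
    · -- j > m
      have hj1 : ¬ ((j : ℕ) < m) := by omega
      have hj2 : ¬ ((j : ℕ) < m + 1) := by omega
      simp only [cfg, dif_neg hj1, dif_neg hj2]
      have e3 : (⟨(j:ℕ)-m, by have := j.isLt; omega⟩ : Fin (n+1))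
          = Fin.succ ⟨(j:ℕ)-(m+1), by omega⟩ := by
        simp only [Fin.ext_iff, Fin.val_succ, Fin.val_last, Fin.val_zero,
          Fin.castSucc_mk, Fin.val_mk]; omega
      rw [hb, e3, Fin.cons_succ]
      show a (Fin.castSucc ⟨(j:ℕ)-(m+1), by omega⟩) = _
      exact congrArg a (Fin.ext rfl)

end Iter
end aux

open HopfAlgebra Coalgebra in
/-- The cyclic operator
`tφ(h, a⁰,…,aⁿ) = φ(h₍₂₎, S⁻¹(h₍₁₎)(aⁿ), a⁰, …, aⁿ⁻¹)` satisfies `t^{n+1} = id`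
on equivariant cochains. -/
theorem statement19 {n : ℕ}
    (N : H → ℕ) (Δ₁ Δ₂ : H → ℕ → H)
    (hrep : ∀ g : H, (Coalgebra.comul (R := ℂ) g : H ⊗[ℂ] H) =
      ∑ i ∈ Finset.range (N g), Δ₁ g i ⊗ₜ[ℂ] Δ₂ g i)
    (ρ : H →ₗ[ℂ] A →ₗ[ℂ] A)
    (hρ_one : ρ 1 = LinearMap.id)
    (hρ_mul : ∀ g h : H, ρ (g * h) = ρ g ∘ₗ ρ h)
    (hact_mul : ∀ (h : H) (a b : A),
      ρ h (a * b) = ∑ i ∈ Finset.range (N h), ρ (Δ₁ h i) a * ρ (Δ₂ h i) b)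
    (hact_one : ∀ h : H, ρ h 1 = (Coalgebra.counit (R := ℂ) h) • (1 : A))
    (Sinv : H →ₗ[ℂ] H)
    (hSinv : ∀ h : H, Sinv (HopfAlgebra.antipode (R := ℂ) h) = h ∧
      HopfAlgebra.antipode (R := ℂ) (Sinv h) = h)
    (φ : H →ₗ[ℂ] MultilinearMap ℂ (fun _ : Fin (n+1) => A) ℂ)
    (hφ : IsEquivariant N Δ₁ Δ₂ ρ (fun h a => φ h a)) :
    ∀ (h : H) (a : Fin (n+1) → A),
      ((cycOpEq N Δ₁ Δ₂ ρ Sinv)^[n+1] (fun h' a' => φ h' a')) h a = φ h a := by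

  intro h a
  classical
  rw [iterFormula N Δ₁ Δ₂ ρ Sinv φ (n+1) le_rfl h a]
  set evalA : MultilinearMap ℂ (fun _ : Fin (n+1) => A) ℂ →ₗ[ℂ] ℂ :=
    { toFun := fun ψ => ψ a
      map_add' := fun _ _ => rfl
      map_smul' := fun _ _ => rfl } with hevalA
  set f : H →ₗ[ℂ] MultilinearMap ℂ (fun _ : Fin (n+1) => H) ℂ :=
    { toFun := fun w => revCur Sinv (curA ρ a (φ w))
      map_add' := fun w w' => by rw [map_add, map_add, revCur_add]
      map_smul' := fun c w => by rw [map_smul, map_smul, revCur_smul]; rfl } with hf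
  have stepA : sweedler N Δ₁ Δ₂ (n+1) h
        (fun ℓ => φ (ℓ (Fin.last (n+1))) (cfg ρ Sinv (n+1) le_rfl ℓ a))
      = sweedler N Δ₁ Δ₂ (n+1) h ⇑(snocCur f) := by
    refine sweedler_congr N Δ₁ Δ₂ (n+1) h _ _ fun ℓ => ?_
    rw [snocCur_apply]
    show _ = revCur Sinv (curA ρ a (φ (ℓ (Fin.last (n+1))))) (Fin.init ℓ)
    rw [revCur_apply, curA_apply]
    refine congrArg (φ (ℓ (Fin.last (n+1)))) ?_
    funext j
    have hj : (j : ℕ) < n + 1 := j.isLt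
    simp only [cfg, dif_pos hj]
    have e1 : (⟨n+1-1-(j:ℕ), by omega⟩ : Fin (n+2)) = Fin.castSucc (Fin.rev j) := by
      simp only [Fin.ext_iff, Fin.castSucc_mk, Fin.val_mk, Fin.coe_castSucc, Fin.val_rev]
      omega
    have e2 : (⟨n+1-(n+1)+(j:ℕ), by omega⟩ : Fin (n+1)) = j := by
      simp only [Fin.ext_iff, Fin.val_mk]; omega
    rw [e1, e2]
    rfl
  rw [stepA, sweedler_eq_Pl N Δ₁ Δ₂ hrep (n+1) (snocCur f) h,
    lastSplit N Δ₁ Δ₂ hrep n (snocCur f) h]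
  have stepC : ∀ i, Pl n (endCur (snocCur f) (Δ₂ h i)) (Δ₁ h i)
      = Pl n (curA ρ a (φ (Δ₂ h i))) (Sinv (Δ₁ h i)) := by
    intro i
    rw [endCur_snocCur]
    show Pl n (revCur Sinv (curA ρ a (φ (Δ₂ h i)))) (Δ₁ h i) = _
    rw [Pl_revCur N Δ₁ Δ₂ hrep Sinv hSinv n _ (Δ₁ h i)]
  rw [Finset.sum_congr rfl fun i _ => stepC i]
  have stepD : ∀ i, Pl n (curA ρ a (φ (Δ₂ h i))) (Sinv (Δ₁ h i))
      = ∑ j ∈ Finset.range (N (Sinv (Δ₁ h i))),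
          φ (antipode (R := ℂ) (Δ₂ (Sinv (Δ₁ h i)) j) * Δ₂ h i
              * Δ₁ (Sinv (Δ₁ h i)) j) a := by
    intro i
    rw [← sweedler_eq_Pl N Δ₁ Δ₂ hrep n _ (Sinv (Δ₁ h i))]
    have hcongr : sweedler N Δ₁ Δ₂ n (Sinv (Δ₁ h i)) ⇑(curA ρ a (φ (Δ₂ h i)))
        = sweedler N Δ₁ Δ₂ n (Sinv (Δ₁ h i))
            (fun ℓ => φ (Δ₂ h i) (fun j => ρ (ℓ j) (a j))) :=
      sweedler_congr N Δ₁ Δ₂ n (Sinv (Δ₁ h i)) _ _ fun ℓ => rfl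
    rw [hcongr, ← hφ (Sinv (Δ₁ h i)) (Δ₂ h i) a]
    rw [show (sweedler N Δ₁ Δ₂ 1 (Sinv (Δ₁ h i))
        (fun ℓ => φ (antipode (R := ℂ) (ℓ 1) * Δ₂ h i * ℓ 0) a))
      = ∑ j ∈ Finset.range (N (Sinv (Δ₁ h i))),
          φ (antipode (R := ℂ) (Δ₂ (Sinv (Δ₁ h i)) j) * Δ₂ h i
              * Δ₁ (Sinv (Δ₁ h i)) j) a from rfl]
  rw [Finset.sum_congr rfl fun i _ => stepD i]
  have stepE : ∀ i, ∑ j ∈ Finset.range (N (Sinv (Δ₁ h i))),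
        φ (antipode (R := ℂ) (Δ₂ (Sinv (Δ₁ h i)) j) * Δ₂ h i
            * Δ₁ (Sinv (Δ₁ h i)) j) a
      = ∑ j ∈ Finset.range (N (Δ₁ h i)),
          φ (Δ₁ (Δ₁ h i) j * Δ₂ h i * Sinv (Δ₂ (Δ₁ h i) j)) a := by
    intro i
    set Bb : H →ₗ[ℂ] H →ₗ[ℂ] ℂ :=
      LinearMap.mk₂ ℂ (fun p q => φ (antipode (R := ℂ) q * Δ₂ h i * p) a)
        (by intro p p' q; rw [mul_add, map_add]; rfl)
        (by intro c p q; rw [mul_smul_comm, map_smul]; rfl)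
        (by intro p q q'; rw [map_add, add_mul, add_mul, map_add]; rfl)
        (by intro c p q
            rw [map_smul, smul_mul_assoc, smul_mul_assoc, map_smul]; rfl) with hBb
    have h1 : ∑ j ∈ Finset.range (N (Sinv (Δ₁ h i))),
        φ (antipode (R := ℂ) (Δ₂ (Sinv (Δ₁ h i)) j) * Δ₂ h i
            * Δ₁ (Sinv (Δ₁ h i)) j) a
        = TensorProduct.lift Bb (Coalgebra.comul (R := ℂ) (Sinv (Δ₁ h i))) := by
      rw [lift_comul_rep N Δ₁ Δ₂ hrep Bb (Sinv (Δ₁ h i))]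
      exact Finset.sum_congr rfl fun j _ => rfl
    rw [h1, comul_Sinv N Δ₁ Δ₂ hrep Sinv hSinv (Δ₁ h i), map_sum]
    refine Finset.sum_congr rfl fun j _ => ?_
    show Bb (Sinv (Δ₂ (Δ₁ h i) j)) (Sinv (Δ₁ (Δ₁ h i) j)) = _
    rw [hBb]
    show φ (antipode (R := ℂ) (Sinv (Δ₁ (Δ₁ h i) j)) * Δ₂ h i
        * Sinv (Δ₂ (Δ₁ h i) j)) a = _
    rw [(hSinv (Δ₁ (Δ₁ h i) j)).2]
  rw [Finset.sum_congr rfl fun i _ => stepE i]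
  set T : H →ₗ[ℂ] H →ₗ[ℂ] H →ₗ[ℂ] ℂ :=
    LinearMap.mk₂ ℂ (fun u v =>
        evalA ∘ₗ φ ∘ₗ LinearMap.mulRight ℂ (Sinv v) ∘ₗ LinearMap.mulLeft ℂ u)
      (by intro u u' v; ext w; simp [add_mul])
      (by intro c u v; ext w; simp [smul_mul_assoc])
      (by intro u v v'; ext w; simp [mul_add, map_add])
      (by intro c u v; ext w; simp [mul_smul_comm]) with hT
  have e5 : ∀ i j, φ (Δ₁ (Δ₁ h i) j * Δ₂ h i * Sinv (Δ₂ (Δ₁ h i) j)) a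
      = T (Δ₁ (Δ₁ h i) j) (Δ₂ (Δ₁ h i) j) (Δ₂ h i) := fun i j => rfl
  rw [Finset.sum_congr rfl fun i _ => Finset.sum_congr rfl fun j _ => e5 i j,
    ← tri_exchange N Δ₁ Δ₂ hrep T h]
  have stepG : ∀ i, ∑ j ∈ Finset.range (N (Δ₂ h i)),
        T (Δ₁ h i) (Δ₁ (Δ₂ h i) j) (Δ₂ (Δ₂ h i) j)
      = counit (R := ℂ) (Δ₂ h i) • φ (Δ₁ h i) a := by
    intro i
    set L2 : H →ₗ[ℂ] ℂ := evalA ∘ₗ φ ∘ₗ LinearMap.mulLeft ℂ (Δ₁ h i) with hL2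
    have e6 : ∀ j, T (Δ₁ h i) (Δ₁ (Δ₂ h i) j) (Δ₂ (Δ₂ h i) j)
        = L2 (Δ₂ (Δ₂ h i) j * Sinv (Δ₁ (Δ₂ h i) j)) := by
      intro j
      show φ (Δ₁ h i * Δ₂ (Δ₂ h i) j * Sinv (Δ₁ (Δ₂ h i) j)) a
          = φ (Δ₁ h i * (Δ₂ (Δ₂ h i) j * Sinv (Δ₁ (Δ₂ h i) j))) a
      rw [mul_assoc]
    rw [Finset.sum_congr rfl fun j _ => e6 j, ← map_sum,
      sum_mul_Sinv N Δ₁ Δ₂ hrep Sinv hSinv (Δ₂ h i), map_smul]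
    congr 1
    show φ (Δ₁ h i * 1) a = φ (Δ₁ h i) a
    rw [mul_one]
  rw [Finset.sum_congr rfl fun i _ => stepG i]
  have e7 : ∑ i ∈ Finset.range (N h), counit (R := ℂ) (Δ₂ h i) • φ (Δ₁ h i) a
      = (evalA ∘ₗ φ) (∑ i ∈ Finset.range (N h), counit (R := ℂ) (Δ₂ h i) • Δ₁ h i) := by
    rw [map_sum]
    exact Finset.sum_congr rfl fun i _ => ((evalA ∘ₗ φ).map_smul _ _).symm
  rw [e7, sum_counit_right N Δ₁ Δ₂ hrep h]
  rfl

end
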